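/- Let X and Y be locally compact Hausdorff spaces, let E and F be real Banach spaces, and let T : C₀(X,E) → C₀(Y,F) be a linear isometry. Let Y₁ be a subset of Y (with the subspace topology), φ : Y₁ → X a continuous map, and h : Y₁ → B(E,F) a map such that Tf(y) = h(y)(f(φ(y))) for every f ∈ C₀(X,E) and every y ∈ Y₁. Then h is continuous with respect to the strong operator topology on B(E,F); that is, for every e ∈ E the map y ↦ h(y)e from Y₁ to F is norm-continuous. -/

import Mathlib

open ZeroAtInfty

open Set in
/-- Auxiliary: a `C₀` function equal to `v` at `x₀` with sup norm at most `‖v‖`. -/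
lemma exists_c0_eq_norm_le {X E : Type*} [TopologicalSpace X] [LocallyCompactSpace X] [T2Space X]
    [NormedAddCommGroup E] [NormedSpace ℝ E] (x₀ : X) (v : E) :
    ∃ f : C₀(X, E), f x₀ = v ∧ ‖f‖ ≤ ‖v‖ := by
  obtain ⟨g, hg1, -, hgc, hg01⟩ :=
    exists_continuous_one_zero_of_isCompact (isCompact_singleton (x := x₀)) isClosed_empty
      (disjoint_empty _)
  have hsupp : HasCompactSupport (fun x => g x • v) := by
    apply HasCompactSupport.intro hgc.isCompact
    intro x hx
    have : g x = 0 := image_eq_zero_of_notMem_tsupport hx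
    simp [this]
  refine ⟨⟨⟨fun x => g x • v, g.continuous.smul continuous_const⟩, hsupp.is_zero_at_infty⟩, ?_, ?_⟩
  · have : g x₀ = 1 := hg1 (Set.mem_singleton x₀)
    simp only [ZeroAtInftyContinuousMap.coe_mk, ContinuousMap.coe_mk, this, one_smul]
  · rw [← ZeroAtInftyContinuousMap.norm_toBCF_eq_norm]
    apply (BoundedContinuousFunction.norm_le (norm_nonneg v)).mpr
    intro x
    have := hg01 x
    calc ‖g x • v‖ = |g x| * ‖v‖ := by rw [norm_smul, Real.norm_eq_abs]
    _ ≤ 1 * ‖v‖ := by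
        apply mul_le_mul_of_nonneg_right _ (norm_nonneg v)
        rw [abs_le]; exact ⟨by linarith [this.1], this.2⟩
    _ = ‖v‖ := one_mul _

/-- Claim 6: if `Tf(y) = h(y)(f(φ(y)))` on `Y₁` with `φ` continuous, then
`h : Y₁ → B(E,F)` is continuous for the strong operator topology, i.e. `y ↦ h(y)e` is
norm-continuous for every `e ∈ E`. -/
theorem h_continuous_sot
    {X Y E F : Type*}
    [TopologicalSpace X] [LocallyCompactSpace X] [T2Space X]
    [TopologicalSpace Y] [LocallyCompactSpace Y] [T2Space Y]
    [NormedAddCommGroup E] [NormedSpace ℝ E] [CompleteSpace E]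
    [NormedAddCommGroup F] [NormedSpace ℝ F] [CompleteSpace F]
    (T : C₀(X, E) →ₗᵢ[ℝ] C₀(Y, F)) (Y₁ : Set Y)
    (φ : Y₁ → X) (hφ : Continuous φ) (h : Y₁ → (E →L[ℝ] F))
    (hT : ∀ (f : C₀(X, E)) (y : Y₁), T f y.1 = h y (f (φ y))) :
    ∀ e : E, Continuous fun y : Y₁ => h y e := by
  -- First: ‖h y v‖ ≤ ‖v‖ for all y, v.
  have hb : ∀ (y : Y₁) (v : E), ‖h y v‖ ≤ ‖v‖ := by
    intro y v
    obtain ⟨f, hfv, hfn⟩ := exists_c0_eq_norm_le (φ y) v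
    have : h y v = T f y.1 := by rw [hT f y, hfv]
    rw [this]
    calc ‖T f y.1‖ ≤ ‖T f‖ := by
          rw [← ZeroAtInftyContinuousMap.norm_toBCF_eq_norm]
          exact (T f).toBCF.norm_coe_le_norm y.1
    _ = ‖f‖ := T.norm_map f
    _ ≤ ‖v‖ := hfn
  intro e
  rw [continuous_iff_continuousAt]
  intro y₀
  obtain ⟨f, hfe, -⟩ := exists_c0_eq_norm_le (φ y₀) e
  have key : Filter.Tendsto (fun y : Y₁ => h y e - h y₀ e) (nhds y₀) (nhds 0) := by
    apply squeeze_zero_norm (a := fun y => ‖e - f (φ y)‖ + ‖T f y.1 - T f y₀.1‖)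
    · intro y
      have : h y e - h y₀ e = h y (e - f (φ y)) + (T f y.1 - T f y₀.1) := by
        rw [hT f y, hT f y₀, hfe, map_sub]
        abel
      rw [this]
      refine (norm_add_le _ _).trans (add_le_add_left (hb y _) _)
    · have h1 : Filter.Tendsto (fun y : Y₁ => ‖e - f (φ y)‖) (nhds y₀) (nhds 0) := by
        have : Continuous fun y : Y₁ => ‖e - f (φ y)‖ :=
          (continuous_const.sub ((map_continuous f).comp hφ)).norm
        have h0 : ‖e - f (φ y₀)‖ = 0 := by rw [hfe]; simp
        simpa [h0] using this.tendsto y₀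
      have h2 : Filter.Tendsto (fun y : Y₁ => ‖T f y.1 - T f y₀.1‖) (nhds y₀) (nhds 0) := by
        have : Continuous fun y : Y₁ => ‖T f y.1 - T f y₀.1‖ :=
          (((map_continuous (T f)).comp continuous_subtype_val).sub continuous_const).norm
        simpa using this.tendsto y₀
      simpa using h1.add h2
  have : Filter.Tendsto (fun y : Y₁ => h y e) (nhds y₀) (nhds (h y₀ e)) := by
    have := key.add_const (h y₀ e)
    simpa using this
  exact this
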